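/- For all positive integers n and k with k ≤ n − 1, the k-synchronous bondage number of the complete graph on n vertices is Sb_k(K_n) = C(n,2) − ⌊(n − k − 1)(n − k + 1)/2⌋, where C(n,2) = n(n−1)/2. -/

import Mathlib

/-- A finite set of vertices `D` is a dominating set of `G` if every vertex
is in `D` or adjacent to a vertex in `D`. -/
def SimpleGraph.IsDominatingSet {V : Type*} (G : SimpleGraph V) (D : Finset V) : Prop :=
  ∀ v : V, v ∈ D ∨ ∃ u ∈ D, G.Adj u v

/-- The domination number of `G`: the minimum cardinality of a dominating set. -/
noncomputable def SimpleGraph.domNum {V : Type*} (G : SimpleGraph V) : ℕ :=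
  sInf {n : ℕ | ∃ D : Finset V, G.IsDominatingSet D ∧ D.card = n}

/-- The `k`-synchronous bondage number of `G`: the minimum cardinality of a set of edges
whose deletion increases the domination number by exactly `k`.  (`Sb 1` is the classical
bondage number.) -/
noncomputable def SimpleGraph.synchBondage {V : Type*} (G : SimpleGraph V) (k : ℕ) : ℕ :=
  sInf {m : ℕ | ∃ E' : Finset (Sym2 V), ↑E' ⊆ G.edgeSet ∧
    (G.deleteEdges ↑E').domNum = G.domNum + k ∧ E'.card = m}

set_option linter.unusedSectionVars false

namespace SBproof
open Finset SimpleGraph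

variable {V : Type} [Fintype V] [DecidableEq V]

lemma isDom_univ (G : SimpleGraph V) : G.IsDominatingSet Finset.univ :=
  fun v => Or.inl (mem_univ v)

lemma domNum_le (G : SimpleGraph V) {D : Finset V} (h : G.IsDominatingSet D) :
    G.domNum ≤ D.card := Nat.sInf_le ⟨D, h, rfl⟩

lemma exists_domSet (G : SimpleGraph V) :
    ∃ D : Finset V, G.IsDominatingSet D ∧ D.card = G.domNum := by
  have h : G.domNum ∈ {n : ℕ | ∃ D : Finset V, G.IsDominatingSet D ∧ D.card = n} :=
    Nat.sInf_mem ⟨Finset.univ.card, ⟨Finset.univ, isDom_univ G, rfl⟩⟩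
  exact h

lemma domNum_le_card (G : SimpleGraph V) : G.domNum ≤ Fintype.card V := by
  simpa using domNum_le G (isDom_univ G)

lemma domNum_add_degree_le (G : SimpleGraph V) [DecidableRel G.Adj] (v : V) :
    G.domNum + G.degree v ≤ Fintype.card V := by
  have hdom : G.IsDominatingSet (Finset.univ \ G.neighborFinset v) := by
    intro w
    by_cases hw : G.Adj v w
    · exact Or.inr ⟨v, by simp [G.irrefl], hw⟩
    · exact Or.inl (by simp [hw])
  have h1 := domNum_le G hdom
  rw [Finset.card_sdiff_of_subset (Finset.subset_univ _)] at h1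
  have hd : G.degree v = (G.neighborFinset v).card := rfl
  have h2 : (G.neighborFinset v).card ≤ Finset.univ.card := Finset.card_le_univ _
  simp only [Finset.card_univ] at h1 h2
  omega

/-- closed neighborhood -/
def cN (G : SimpleGraph V) [DecidableRel G.Adj] (v : V) : Finset V :=
  insert v (G.neighborFinset v)

lemma card_cN (G : SimpleGraph V) [DecidableRel G.Adj] (v : V) :
    (cN G v).card = G.degree v + 1 := by
  rw [cN, Finset.card_insert_of_notMem (by simp [G.irrefl])]
  rfl

lemma mem_cN {G : SimpleGraph V} [DecidableRel G.Adj] {v w : V} :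
    w ∈ cN G v ↔ w = v ∨ G.Adj v w := by simp [cN]

lemma pair_bound (G : SimpleGraph V) [DecidableRel G.Adj] {v u : V} (hvu : G.Adj v u) :
    G.domNum + (cN G v ∪ cN G u).card ≤ Fintype.card V + 2 := by
  set W := cN G v ∪ cN G u with hW
  have hdom : G.IsDominatingSet ((Finset.univ \ W) ∪ {v, u}) := by
    intro w
    by_cases hw : w ∈ W
    · rcases Finset.mem_union.mp hw with h | h
      · rcases mem_cN.mp h with rfl | h
        · exact Or.inl (by simp)
        · exact Or.inr ⟨v, by simp, h⟩
      · rcases mem_cN.mp h with rfl | h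
        · exact Or.inl (by simp)
        · exact Or.inr ⟨u, by simp, h⟩
    · exact Or.inl (by simp [hw])
  have h1 := domNum_le G hdom
  have h2 : ((Finset.univ \ W) ∪ {v, u}).card ≤ (Fintype.card V - W.card) + 2 := by
    calc ((Finset.univ \ W) ∪ {v, u}).card ≤ (Finset.univ \ W).card + ({v, u} : Finset V).card :=
          Finset.card_union_le _ _
      _ ≤ (Fintype.card V - W.card) + 2 := by
          rw [Finset.card_sdiff_of_subset (Finset.subset_univ _), Finset.card_univ]
          gcongr
          exact (Finset.card_insert_le _ _).trans (by simp)
  have h3 : W.card ≤ Fintype.card V := by simpa using Finset.card_le_univ W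
  omega

lemma domNum_le_induce_succ (G : SimpleGraph V) [DecidableRel G.Adj] (v : V) :
    G.domNum ≤ (G.induce (↑(Finset.univ \ cN G v) : Set V)).domNum + 1 := by
  set B := Finset.univ \ cN G v with hB
  obtain ⟨D', hD', hc⟩ := exists_domSet (G.induce (↑B : Set V))
  have hdom : G.IsDominatingSet (insert v (D'.image Subtype.val)) := by
    intro w
    by_cases hw : w ∈ cN G v
    · rcases mem_cN.mp hw with rfl | h
      · exact Or.inl (Finset.mem_insert_self _ _)
      · exact Or.inr ⟨v, Finset.mem_insert_self _ _, h⟩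
    · have hwB : w ∈ (↑B : Set V) := by simp [hB, hw]
      rcases hD' ⟨w, hwB⟩ with h | ⟨u, hu, hadj⟩
      · exact Or.inl (Finset.mem_insert_of_mem (Finset.mem_image_of_mem _ h))
      · exact Or.inr ⟨↑u, Finset.mem_insert_of_mem (Finset.mem_image_of_mem _ hu), hadj⟩
  calc G.domNum ≤ (insert v (D'.image Subtype.val)).card := domNum_le G hdom
    _ ≤ (D'.image Subtype.val).card + 1 := Finset.card_insert_le _ _
    _ ≤ D'.card + 1 := by gcongr; exact Finset.card_image_le
    _ = _ := by rw [hc]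

lemma induce_degree (G : SimpleGraph V) [DecidableRel G.Adj] (B : Finset V)
    [DecidableRel (G.induce (↑B : Set V)).Adj]
    (x : (↑B : Set V)) :
    (G.induce (↑B : Set V)).degree x = (B.filter (fun b => G.Adj ↑x b)).card := by
  rw [← SimpleGraph.card_neighborFinset_eq_degree]
  refine Finset.card_bij (fun y _ => (y : V)) ?_ ?_ ?_
  · intro y hy
    simp only [Finset.mem_filter]
    rw [SimpleGraph.mem_neighborFinset] at hy
    exact ⟨by simpa using y.2, hy⟩
  · intro a ha b hb hab
    exact Subtype.ext hab
  · intro b hb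
    simp only [Finset.mem_filter] at hb
    exact ⟨⟨b, by simpa using hb.1⟩, by rw [SimpleGraph.mem_neighborFinset]; exact hb.2, rfl⟩

lemma sum_card_filter_comm (G : SimpleGraph V) [DecidableRel G.Adj] (A B : Finset V) :
    ∑ w ∈ B, ((A.filter (fun u => G.Adj w u)).card)
      = ∑ u ∈ A, ((B.filter (fun w => G.Adj u w)).card) := by
  simp_rw [Finset.card_filter]
  rw [Finset.sum_comm]
  refine Finset.sum_congr rfl fun u _ => Finset.sum_congr rfl fun w _ => ?_
  exact if_congr (G.adj_comm w u) rfl rfl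


lemma vizing : ∀ (N : ℕ) (V : Type) [Fintype V] [DecidableEq V] (G : SimpleGraph V)
    [DecidableRel G.Adj], Fintype.card V = N → 2 ≤ G.domNum →
    2 * G.edgeFinset.card ≤ (N - G.domNum) * (N - G.domNum + 2) := by
  intro N
  induction N using Nat.strong_induction_on with
  | _ N IH =>
    intro V _ _ G _ hcard hg2
    have hgN : G.domNum ≤ N := hcard ▸ domNum_le_card G
    haveI hne : Nonempty V := by
      rw [← Fintype.card_pos_iff, hcard]; omega
    obtain ⟨v, -, hmax⟩ := Finset.exists_max_image (α := ℕ) Finset.univ (fun u => G.degree u) Finset.univ_nonempty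
    set γ := G.domNum with hγ
    set Δ := G.degree v with hΔ
    set t := N - γ with ht
    have hΔt : Δ ≤ t := by
      have := domNum_add_degree_le G v
      rw [hcard] at this; omega
    have hdegsum := G.sum_degrees_eq_twice_card_edges
    rcases Nat.lt_or_ge γ 3 with hγ2 | hγ3
    · -- base case γ = 2
      have hγ2' : γ = 2 := by omega
      have hsum : ∑ u : V, G.degree u ≤ N * t := by
        calc ∑ u : V, G.degree u ≤ ∑ _u : V, Δ :=
              Finset.sum_le_sum (fun u _ => hmax u (Finset.mem_univ u))
          _ = N * Δ := by rw [Finset.sum_const, Finset.card_univ, hcard, smul_eq_mul]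
          _ ≤ N * t := Nat.mul_le_mul_left _ hΔt
      have htN : t + 2 = N := by omega
      rw [← hdegsum]
      calc ∑ u : V, G.degree u ≤ N * t := hsum
        _ = t * (t + 2) := by rw [htN]; ring
    · -- inductive step γ ≥ 3
      set B : Finset V := Finset.univ \ cN G v with hB
      have hcardB : B.card = N - (Δ + 1) := by
        rw [hB, Finset.card_sdiff_of_subset (Finset.subset_univ _), Finset.card_univ, hcard, card_cN]
      haveI : DecidableRel (G.induce (↑B : Set V)).Adj :=
        fun a b => (inferInstance : Decidable (G.Adj ↑a ↑b))
      set γ' := (G.induce (↑B : Set V)).domNum with hγ'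
      have h5 : γ ≤ γ' + 1 := domNum_le_induce_succ G v
      have hcardB' : Fintype.card (↑B : Set V) = B.card := Fintype.card_coe B
      have hγ'2 : 2 ≤ γ' := by omega
      have hBN : B.card < N := by
        have : 0 < Δ + 1 := Nat.succ_pos _
        omega
      have hIH := IH B.card hBN (↑B : Set V) (G.induce (↑B : Set V)) hcardB' hγ'2
      -- bound the induced part
      have hγ'B : γ' ≤ B.card := hcardB' ▸ domNum_le_card _
      have ht' : B.card - γ' ≤ t - Δ := by omega
      have hIH2 : 2 * (G.induce (↑B : Set V)).edgeFinset.card ≤ (t - Δ) * (t - Δ + 2) :=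
        hIH.trans (Nat.mul_le_mul ht' (by omega))
      -- split the degree sum
      have hsplit : ∑ u : V, G.degree u
          = ∑ w ∈ B, G.degree w + ∑ u ∈ cN G v, G.degree u := by
        rw [hB, Finset.sum_sdiff (Finset.subset_univ _)]
      -- decompose degrees of vertices in B
      have hdecomp : ∀ w ∈ B, G.degree w
          = (B.filter (fun b => G.Adj w b)).card + ((cN G v).filter (fun b => G.Adj w b)).card := by
        intro w hw
        have h1 : G.neighborFinset w = Finset.univ.filter (fun b => G.Adj w b) :=
          G.neighborFinset_eq_filter
        have h2 : (Finset.univ : Finset V) = B ∪ cN G v := by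
          rw [hB, Finset.sdiff_union_of_subset (Finset.subset_univ _)]
        have h3 : Disjoint (B.filter (fun b => G.Adj w b)) ((cN G v).filter (fun b => G.Adj w b)) :=
          Finset.disjoint_filter_filter (by rw [hB]; exact Finset.sdiff_disjoint)
        rw [← SimpleGraph.card_neighborFinset_eq_degree, h1, h2, Finset.filter_union,
          Finset.card_union_of_disjoint h3]
      have hBsum : ∑ w ∈ B, G.degree w
          = 2 * (G.induce (↑B : Set V)).edgeFinset.card
            + ∑ u ∈ cN G v, ((B.filter (fun b => G.Adj u b)).card) := by
        rw [Finset.sum_congr rfl hdecomp, Finset.sum_add_distrib]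
        congr 1
        · -- inner B-sum equals twice induced edges
          rw [(G.induce (↑B : Set V)).sum_degrees_eq_twice_card_edges.symm]
          rw [← Finset.sum_coe_sort B (fun w => (B.filter (fun b => G.Adj w b)).card)]
          apply Finset.sum_congr rfl
          intro x _
          exact (induce_degree G B x).symm
        · exact sum_card_filter_comm G (cN G v) B
      -- bound the terms over the closed neighborhood
      have hcv : (B.filter (fun b => G.Adj v b)).card = 0 := by
        rw [Finset.card_eq_zero, Finset.filter_eq_empty_iff]
        intro b hb
        rw [hB, Finset.mem_sdiff] at hb
        exact fun hadj => hb.2 (mem_cN.mpr (Or.inr hadj))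
      have hterm : ∀ u ∈ G.neighborFinset v,
          G.degree u + (B.filter (fun b => G.Adj u b)).card ≤ t + 1 := by
        intro u hu
        rw [SimpleGraph.mem_neighborFinset] at hu
        have hpb := pair_bound G hu
        rw [hcard] at hpb
        have hsub : cN G v ∪ (B.filter (fun b => G.Adj u b)) ⊆ cN G v ∪ cN G u := by
          apply Finset.union_subset_union_right
          intro b hb
          rw [Finset.mem_filter] at hb
          exact mem_cN.mpr (Or.inr hb.2)
        have hdisj : Disjoint (cN G v) (B.filter (fun b => G.Adj u b)) := by
          apply Finset.disjoint_left.mpr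
          intro b hbc hbf
          rw [Finset.mem_filter, hB, Finset.mem_sdiff] at hbf
          exact hbf.1.2 hbc
        have hcards : (cN G v).card + (B.filter (fun b => G.Adj u b)).card
            ≤ (cN G v ∪ cN G u).card := by
          rw [← Finset.card_union_of_disjoint hdisj]
          exact Finset.card_le_card hsub
        rw [card_cN] at hcards
        have hdu : G.degree u ≤ Δ := hmax u (Finset.mem_univ u)
        omega
      have hsumCN : ∑ u ∈ cN G v, (G.degree u + (B.filter (fun b => G.Adj u b)).card)
          ≤ Δ * (t + 2) := by
        rw [cN, Finset.sum_insert (by simp [G.irrefl])]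
        have h1 : G.degree v + (B.filter (fun b => G.Adj v b)).card = Δ := by
          rw [hcv]
          omega
        have h2 : ∑ u ∈ G.neighborFinset v, (G.degree u + (B.filter (fun b => G.Adj u b)).card)
            ≤ Δ * (t + 1) := by
          calc ∑ u ∈ G.neighborFinset v, (G.degree u + (B.filter (fun b => G.Adj u b)).card)
              ≤ ∑ _u ∈ G.neighborFinset v, (t+1) := Finset.sum_le_sum hterm
            _ = Δ * (t+1) := by
                rw [Finset.sum_const, smul_eq_mul]
                rfl
        have h3 : Δ * (t + 2) = Δ + Δ * (t + 1) := by ring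
        omega
      have hkey : 2 * G.edgeFinset.card
          = 2 * (G.induce (↑B : Set V)).edgeFinset.card
            + ∑ u ∈ cN G v, (G.degree u + (B.filter (fun b => G.Adj u b)).card) := by
        rw [← hdegsum, hsplit, hBsum, Finset.sum_add_distrib]
        ring
      rw [hkey]
      obtain ⟨d, hd⟩ : ∃ d, t = Δ + d := ⟨t - Δ, by omega⟩
      have htd : t - Δ = d := by omega
      calc 2 * (G.induce (↑B : Set V)).edgeFinset.card
            + ∑ u ∈ cN G v, (G.degree u + (B.filter (fun b => G.Adj u b)).card)
          ≤ (t - Δ) * (t - Δ + 2) + Δ * (t + 2) := Nat.add_le_add hIH2 hsumCN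
        _ ≤ t * (t + 2) := by rw [htd, hd]; nlinarith


/-! ### The extremal construction -/

def mate (m x : ℕ) : ℕ :=
  if x = m - 1 then m - 2 else if x % 2 = 0 then x + 1 else x - 1

lemma mate_lt {m x : ℕ} (hm : 2 ≤ m) (hx : x < m) : mate m x < m := by
  unfold mate; split_ifs <;> omega

lemma mate_ne {m x : ℕ} (hm : 2 ≤ m) (hx : x < m) : mate m x ≠ x := by
  unfold mate; split_ifs <;> omega

def G0 (n m : ℕ) : SimpleGraph (Fin n) where
  Adj a b := a ≠ b ∧ a.val < m ∧ b.val < m ∧ mate m a.val ≠ b.val ∧ mate m b.val ≠ a.val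
  symm := by
    constructor
    rintro a b ⟨h1, h2, h3, h4, h5⟩
    exact ⟨h1.symm, h3, h2, h5, h4⟩
  loopless := ⟨fun a h => h.1 rfl⟩

instance instDecG0 (n m : ℕ) : DecidableRel (G0 n m).Adj := fun a b =>
  decidable_of_iff (a ≠ b ∧ a.val < m ∧ b.val < m ∧ mate m a.val ≠ b.val ∧ mate m b.val ≠ a.val)
    Iff.rfl

lemma G0_adj {n m : ℕ} {a b : Fin n} : (G0 n m).Adj a b ↔
    a ≠ b ∧ a.val < m ∧ b.val < m ∧ mate m a.val ≠ b.val ∧ mate m b.val ≠ a.val := Iff.rfl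

/-- the first `m` vertices -/
def Fm (n m : ℕ) : Finset (Fin n) := Finset.univ.filter (fun a => a.val < m)

lemma card_Fm {n m : ℕ} (hmn : m ≤ n) : (Fm n m).card = m := by
  have h : (Fm n m).card = (Finset.range m).card := by
    apply Finset.card_bij (fun (a : Fin n) _ => a.val)
    · intro a ha
      rw [Finset.mem_range]
      exact (Finset.mem_filter.mp ha).2
    · intro a _ b _ h
      exact Fin.ext h
    · intro b hb
      rw [Finset.mem_range] at hb
      exact ⟨⟨b, lt_of_lt_of_le hb hmn⟩, Finset.mem_filter.mpr ⟨Finset.mem_univ _, hb⟩, rfl⟩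
  rw [h, Finset.card_range]

lemma deg_G0_big {n m : ℕ} (a : Fin n) (ha : ¬ a.val < m) : (G0 n m).degree a = 0 := by
  rw [← SimpleGraph.card_neighborFinset_eq_degree, Finset.card_eq_zero]
  ext b
  simp only [SimpleGraph.mem_neighborFinset, Finset.notMem_empty, iff_false]
  intro h
  exact ha h.2.1

lemma deg_G0_small {n m : ℕ} (hm : 2 ≤ m) (hmn : m ≤ n) (a : Fin n) (ha : a.val < m) :
    (G0 n m).degree a = if m % 2 = 1 ∧ a.val = m - 2 then m - 3 else m - 2 := by
  have hkey : (G0 n m).neighborFinset a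
      = (Fm n m) \ (Finset.univ.filter (fun b : Fin n =>
          b.val < m ∧ (b.val = a.val ∨ mate m a.val = b.val ∨ mate m b.val = a.val))) := by
    ext b
    simp only [SimpleGraph.mem_neighborFinset, G0_adj, Fm, Finset.mem_sdiff, Finset.mem_filter,
      Finset.mem_univ, true_and, ne_eq, Fin.ext_iff]
    constructor
    · rintro ⟨h1, h2, h3, h4, h5⟩
      exact ⟨h3, fun h => by tauto⟩
    · rintro ⟨hb, h⟩
      push_neg at h
      have h2 := h hb
      exact ⟨fun e => h2.1 (by rw [e]), ha, hb, h2.2.1, h2.2.2⟩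
  rw [← SimpleGraph.card_neighborFinset_eq_degree, hkey, Finset.card_sdiff_of_subset ?sub]
  case sub =>
    intro b hb
    simp only [Finset.mem_filter] at hb
    simp only [Fm, Finset.mem_filter, Finset.mem_univ, true_and]
    exact hb.2.1
  rw [card_Fm hmn]
  congr 1
  by_cases hspec : m % 2 = 1 ∧ a.val = m - 2
  · rw [if_pos hspec]
    have hset : (Finset.univ.filter (fun b : Fin n =>
          b.val < m ∧ (b.val = a.val ∨ mate m a.val = b.val ∨ mate m b.val = a.val)))
        = {a, ⟨m - 3, by omega⟩, ⟨m - 1, by omega⟩} := by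
      ext b
      simp only [Finset.mem_filter, Finset.mem_univ, true_and, Finset.mem_insert,
        Finset.mem_singleton, Fin.ext_iff]
      constructor
      · rintro ⟨hb, h⟩
        rcases h with h | h | h
        · exact Or.inl h
        · right; left
          revert h; unfold mate; split_ifs <;> omega
        · revert h; unfold mate; split_ifs <;> omega
      · rintro (h | h | h)
        · exact ⟨by omega, Or.inl h⟩
        · refine ⟨by omega, Or.inr (Or.inl ?_)⟩
          unfold mate; split_ifs <;> omega
        · refine ⟨by omega, Or.inr (Or.inr ?_)⟩
          unfold mate; split_ifs <;> omega
    rw [hset]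
    rw [Finset.card_insert_of_notMem (by simp [Fin.ext_iff]; omega),
      Finset.card_insert_of_notMem (by simp [Fin.ext_iff]; omega), Finset.card_singleton]
  · rw [if_neg hspec]
    have hml : mate m a.val < m := mate_lt hm ha
    have hset : (Finset.univ.filter (fun b : Fin n =>
          b.val < m ∧ (b.val = a.val ∨ mate m a.val = b.val ∨ mate m b.val = a.val)))
        = {a, ⟨mate m a.val, by omega⟩} := by
      ext b
      simp only [Finset.mem_filter, Finset.mem_univ, true_and, Finset.mem_insert,
        Finset.mem_singleton, Fin.ext_iff]
      constructor
      · rintro ⟨hb, h⟩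
        rcases h with h | h | h
        · exact Or.inl h
        · exact Or.inr h.symm
        · right
          revert h; unfold mate
          have hsp : ¬ (m % 2 = 1 ∧ a.val = m - 2) := hspec
          split_ifs <;> omega
      · rintro (h | h)
        · exact ⟨by omega, Or.inl h⟩
        · exact ⟨by omega, Or.inr (Or.inl h.symm)⟩
    rw [hset]
    rw [Finset.card_insert_of_notMem
      (by simp only [Finset.mem_singleton, Fin.ext_iff]; exact fun h => mate_ne hm ha h.symm),
      Finset.card_singleton]

lemma twice_e_G0 {n m : ℕ} (hm : 2 ≤ m) (hmn : m ≤ n) :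
    2 * (G0 n m).edgeFinset.card = if m % 2 = 1 then m * m - 2 * m - 1 else m * (m - 2) := by
  rw [← SimpleGraph.sum_degrees_eq_twice_card_edges]
  have hsplit : (Finset.univ : Finset (Fin n)) = Fm n m ∪ (Finset.univ \ Fm n m) := by
    rw [Finset.union_sdiff_of_subset (Finset.subset_univ _)]
  rw [hsplit, Finset.sum_union Finset.disjoint_sdiff]
  have hzero : ∑ a ∈ Finset.univ \ Fm n m, (G0 n m).degree a = 0 := by
    apply Finset.sum_eq_zero
    intro a ha
    rw [Finset.mem_sdiff, Fm, Finset.mem_filter] at ha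
    exact deg_G0_big a (fun h => ha.2 ⟨Finset.mem_univ _, h⟩)
  rw [hzero, add_zero]
  by_cases hodd : m % 2 = 1
  · rw [if_pos hodd]
    have hm3 : 3 ≤ m := by omega
    set aspec : Fin n := ⟨m - 2, by omega⟩ with haspec
    have hmem : aspec ∈ Fm n m := by
      simp only [Fm, Finset.mem_filter, Finset.mem_univ, true_and, haspec]
      omega
    rw [← Finset.add_sum_erase _ _ hmem]
    have h1 : (G0 n m).degree aspec = m - 3 := by
      rw [deg_G0_small hm hmn aspec (by simp [haspec]; omega), if_pos ⟨hodd, rfl⟩]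
    have h2 : ∑ a ∈ (Fm n m).erase aspec, (G0 n m).degree a = (m - 1) * (m - 2) := by
      rw [Finset.sum_congr rfl (fun a ha => ?_), Finset.sum_const, smul_eq_mul,
        Finset.card_erase_of_mem hmem, card_Fm hmn]
      rw [Finset.mem_erase, Fm, Finset.mem_filter] at ha
      rw [deg_G0_small hm hmn a ha.2.2, if_neg]
      rintro ⟨-, hval⟩
      exact ha.1 (Fin.ext (by simp [haspec, hval]))
    rw [h1, h2]
    obtain ⟨j, rfl⟩ : ∃ j, m = j + 3 := ⟨m - 3, by omega⟩
    have e1 : (j + 3 - 1) * (j + 3 - 2) = j * j + 3 * j + 2 := by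
      simp only [show j + 3 - 1 = j + 2 by omega, show j + 3 - 2 = j + 1 by omega]
      ring
    have e2 : (j + 3) * (j + 3) = j * j + 6 * j + 9 := by ring
    omega
  · rw [if_neg hodd]
    have h2 : ∑ a ∈ Fm n m, (G0 n m).degree a = m * (m - 2) := by
      rw [Finset.sum_congr rfl (fun a ha => ?_), Finset.sum_const, smul_eq_mul, card_Fm hmn]
      rw [Fm, Finset.mem_filter] at ha
      rw [deg_G0_small hm hmn a ha.2, if_neg (by omega)]
    exact h2

lemma e_G0 {n m : ℕ} (hm : 2 ≤ m) (hmn : m ≤ n) :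
    (G0 n m).edgeFinset.card = (m - 2) * m / 2 := by
  have h := twice_e_G0 hm hmn
  have hc : (m - 2) * m = m * m - 2 * m := Nat.sub_mul m 2 m
  have h3 : 2 * m ≤ m * m := Nat.mul_le_mul_right m hm
  by_cases hodd : m % 2 = 1
  · rw [if_pos hodd] at h
    have h3' : 3 * m ≤ m * m := Nat.mul_le_mul_right m (by omega)
    omega
  · rw [if_neg hodd] at h
    have hme : m * (m - 2) = m * m - 2 * m := by rw [Nat.mul_sub]; ring_nf
    obtain ⟨j, rfl⟩ : ∃ j, m = 2 * j := ⟨m / 2, by omega⟩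
    have h4 : 2 * j * (2 * j) = 2 * (j * (2 * j)) := by ring
    omega

lemma domNum_G0 {n m : ℕ} (hm : 2 ≤ m) (hmn : m ≤ n) :
    (G0 n m).domNum = (n - m) + 2 := by
  have hn2 : 2 ≤ n := le_trans hm hmn
  have hmate0 : mate m 0 = 1 := by unfold mate; split_ifs <;> omega
  set top : Finset (Fin n) := Finset.univ.filter (fun a => ¬ a.val < m) with htop
  have hcardtop : top.card = n - m := by
    have htop' : top = Finset.univ \ Fm n m := by
      rw [htop, Fm, Finset.filter_not]
    rw [htop', Finset.card_sdiff_of_subset (Finset.subset_univ _), card_Fm hmn, Finset.card_univ,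
      Fintype.card_fin]
  apply le_antisymm
  · -- upper bound
    set v0 : Fin n := ⟨0, by omega⟩ with hv0
    set v1 : Fin n := ⟨1, by omega⟩ with hv1
    have hdom : (G0 n m).IsDominatingSet (insert v0 (insert v1 top)) := by
      intro w
      by_cases hw : w.val < m
      · by_cases hw0 : w = v0
        · exact Or.inl (by simp [hw0])
        · by_cases hw1 : w = v1
          · exact Or.inl (by simp [hw1])
          · refine Or.inr ⟨v0, by simp, ?_⟩
            have hwv : w.val ≠ 0 := fun h => hw0 (Fin.ext (by simp [hv0, h]))
            have hwv1 : w.val ≠ 1 := fun h => hw1 (Fin.ext (by simp [hv1, h]))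
            refine ⟨fun h => hw0 h.symm, by simp [hv0]; omega, hw, ?_, ?_⟩
            · simp only [hv0]
              rw [hmate0]
              exact fun h => hwv1 h.symm
            · simp only [hv0]
              unfold mate; split_ifs <;> omega
      · have hwt : w ∈ top := by rw [htop]; simp only [Finset.mem_filter, Finset.mem_univ, true_and]; omega
        exact Or.inl (Finset.mem_insert_of_mem (Finset.mem_insert_of_mem hwt))
    calc (G0 n m).domNum ≤ (insert v0 (insert v1 top)).card := domNum_le _ hdom
      _ ≤ (n - m) + 2 := by
        calc (insert v0 (insert v1 top)).card ≤ (insert v1 top).card + 1 :=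
              Finset.card_insert_le _ _
          _ ≤ top.card + 1 + 1 := by gcongr; exact Finset.card_insert_le _ _
          _ = (n - m) + 2 := by omega
  · -- lower bound
    obtain ⟨D, hD, hc⟩ := exists_domSet (G0 n m)
    rw [← hc]
    have htopD : top ⊆ D := by
      intro a ha
      rw [htop, Finset.mem_filter] at ha
      rcases hD a with h | ⟨u, hu, hadj⟩
      · exact h
      · exact absurd hadj.2.2.1 ha.2
    have hlow : ∃ u1 ∈ D, ∃ u2 ∈ D, u1 ≠ u2 ∧ u1.val < m ∧ u2.val < m := by
      have h0 : ∃ u1 ∈ D, u1.val < m := by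
        rcases hD ⟨0, by omega⟩ with h | ⟨u, hu, hadj⟩
        · exact ⟨_, h, by simp; omega⟩
        · exact ⟨u, hu, hadj.2.1⟩
      obtain ⟨u1, hu1D, hu1m⟩ := h0
      have hml : mate m u1.val < m := mate_lt hm hu1m
      set x : Fin n := ⟨mate m u1.val, by omega⟩ with hx
      have hxu : x ≠ u1 := by
        intro h
        have hxv : (x : ℕ) = mate m ↑u1 := rfl
        rw [h] at hxv
        exact mate_ne hm hu1m hxv.symm
      rcases hD x with h | ⟨z, hz, hadj⟩
      · exact ⟨u1, hu1D, x, h, hxu.symm, hu1m, by simp [hx, hml]⟩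
      · refine ⟨u1, hu1D, z, hz, ?_, hu1m, hadj.2.1⟩
        intro h
        subst h
        exact hadj.2.2.2.1 rfl
    obtain ⟨u1, hu1, u2, hu2, hne, hm1, hm2'⟩ := hlow
    have hsub : top ∪ {u1, u2} ⊆ D := by
      apply Finset.union_subset htopD
      intro a ha
      rcases Finset.mem_insert.mp ha with rfl | ha
      · exact hu1
      · rw [Finset.mem_singleton] at ha; subst ha; exact hu2
    have hdisj : Disjoint top ({u1, u2} : Finset (Fin n)) := by
      rw [Finset.disjoint_right]
      intro a ha hat
      rw [htop, Finset.mem_filter] at hat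
      rcases Finset.mem_insert.mp ha with rfl | ha
      · exact hat.2 hm1
      · rw [Finset.mem_singleton] at ha; subst ha; exact hat.2 hm2'
    calc (n - m) + 2 = (top ∪ {u1, u2}).card := by
          rw [Finset.card_union_of_disjoint hdisj, hcardtop, Finset.card_insert_of_notMem
            (by simp [hne]), Finset.card_singleton]
      _ ≤ D.card := Finset.card_le_card hsub

lemma domNum_top {n : ℕ} (hn : 1 ≤ n) : (⊤ : SimpleGraph (Fin n)).domNum = 1 := by
  apply le_antisymm
  · have hdom : (⊤ : SimpleGraph (Fin n)).IsDominatingSet {⟨0, hn⟩} := by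
      intro v
      by_cases h : v = ⟨0, hn⟩
      · exact Or.inl (by simp [h])
      · exact Or.inr ⟨⟨0, hn⟩, by simp, fun e => h e.symm⟩
    simpa using domNum_le _ hdom
  · obtain ⟨D, hD, hc⟩ := exists_domSet (⊤ : SimpleGraph (Fin n))
    rcases Nat.eq_zero_or_pos (⊤ : SimpleGraph (Fin n)).domNum with h0 | h1
    · rw [h0, Finset.card_eq_zero] at hc
      subst hc
      rcases hD ⟨0, hn⟩ with h | ⟨u, hu, -⟩ <;> simp at *
    · exact h1

end SBproof

/-- for `1 ≤ k ≤ n − 1`, the `k`-synchronous bondage number of the complete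
graph `K_n` is `C(n,2) − ⌊(n − k − 1)(n − k + 1)/2⌋`. -/
theorem synchBondage_completeGraph (n k : ℕ) (hn : 1 ≤ n) (hk : 1 ≤ k) (hkn : k ≤ n - 1) :
    (⊤ : SimpleGraph (Fin n)).synchBondage k =
      n.choose 2 - (n - k - 1) * (n - k + 1) / 2 := by
  have hn2 : 2 ≤ n := by omega
  set m : ℕ := n - k + 1 with hmdef
  have hm2 : 2 ≤ m := by omega
  have hmn : m ≤ n := by omega
  set T : ℕ := n.choose 2 - (n - k - 1) * (n - k + 1) / 2 with hT
  have htop1 : (⊤ : SimpleGraph (Fin n)).domNum = 1 := SBproof.domNum_top hn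
  have hchoose : (⊤ : SimpleGraph (Fin n)).edgeFinset.card = n.choose 2 := by
    simpa using SimpleGraph.card_edgeFinset_top_eq_card_choose_two (V := Fin n)
  have hG0sub : (SBproof.G0 n m).edgeFinset ⊆ (⊤ : SimpleGraph (Fin n)).edgeFinset :=
    SimpleGraph.edgeFinset_mono le_top
  have heG0 : (SBproof.G0 n m).edgeFinset.card = (n - k - 1) * (n - k + 1) / 2 := by
    rw [SBproof.e_G0 hm2 hmn]
    congr 2 <;> omega
  set E0 : Finset (Sym2 (Fin n)) :=
    (⊤ : SimpleGraph (Fin n)).edgeFinset \ (SBproof.G0 n m).edgeFinset with hE0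
  have hdelete : (⊤ : SimpleGraph (Fin n)).deleteEdges ↑E0 = SBproof.G0 n m := by
    ext a b
    simp only [SimpleGraph.deleteEdges_adj, SimpleGraph.top_adj, hE0, Finset.coe_sdiff,
      Set.mem_diff, Finset.mem_coe, SimpleGraph.mem_edgeFinset, SimpleGraph.mem_edgeSet,
      SimpleGraph.top_adj]
    constructor
    · rintro ⟨hne, h⟩
      by_contra hadj
      exact h ⟨hne, hadj⟩
    · intro h
      exact ⟨h.1, fun hc => hc.2 h⟩
  have hsub0 : ↑E0 ⊆ (⊤ : SimpleGraph (Fin n)).edgeSet := by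
    intro e he
    rw [Finset.mem_coe, hE0, Finset.mem_sdiff] at he
    exact (SimpleGraph.mem_edgeFinset).mp he.1
  have hcardE0 : E0.card = T := by
    rw [hE0, Finset.card_sdiff_of_subset hG0sub, hchoose, heG0]
  have hdomE0 : ((⊤ : SimpleGraph (Fin n)).deleteEdges ↑E0).domNum
      = (⊤ : SimpleGraph (Fin n)).domNum + k := by
    rw [hdelete, SBproof.domNum_G0 hm2 hmn, htop1]
    omega
  have hmem : T ∈ {M : ℕ | ∃ E' : Finset (Sym2 (Fin n)),
      ↑E' ⊆ (⊤ : SimpleGraph (Fin n)).edgeSet ∧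
      ((⊤ : SimpleGraph (Fin n)).deleteEdges ↑E').domNum
        = (⊤ : SimpleGraph (Fin n)).domNum + k ∧ E'.card = M} :=
    ⟨E0, hsub0, hdomE0, hcardE0⟩
  rw [SimpleGraph.synchBondage]
  apply le_antisymm (Nat.sInf_le hmem)
  apply le_csInf ⟨T, hmem⟩
  rintro M ⟨E', hsubE, hdomE, hcardE⟩
  haveI hdec : DecidableRel
      ((⊤ : SimpleGraph (Fin n)).deleteEdges (↑E' : Set (Sym2 (Fin n)))).Adj := by
    intro a b
    refine decidable_of_iff (a ≠ b ∧ s(a, b) ∉ E') ?_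
    simp [SimpleGraph.deleteEdges_adj]
  have hdom2 : 2 ≤ ((⊤ : SimpleGraph (Fin n)).deleteEdges (↑E' : Set (Sym2 (Fin n)))).domNum := by
    rw [hdomE, htop1]; omega
  have hviz := SBproof.vizing n (Fin n) ((⊤ : SimpleGraph (Fin n)).deleteEdges ↑E')
    (Fintype.card_fin n) hdom2
  rw [hdomE, htop1] at hviz
  have hr1 : n - (1 + k) = n - k - 1 := by omega
  have hr2 : n - k - 1 + 2 = n - k + 1 := by omega
  rw [hr1, hr2] at hviz
  have hEtop : E' ⊆ (⊤ : SimpleGraph (Fin n)).edgeFinset := by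
    intro e he
    rw [SimpleGraph.mem_edgeFinset]
    exact hsubE he
  have hEcard : E'.card ≤ n.choose 2 := by
    rw [← hchoose]; exact Finset.card_le_card hEtop
  have hdelcard : ((⊤ : SimpleGraph (Fin n)).deleteEdges (↑E' : Set (Sym2 (Fin n)))).edgeFinset.card
      = n.choose 2 - E'.card := by
    rw [SimpleGraph.edgeFinset_deleteEdges, Finset.card_sdiff_of_subset hEtop, hchoose]
  rw [hdelcard] at hviz
  omega
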